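/- In the torus expansion setup, let I ⊆ {1,…,d} be non-empty with square-free monomial t_I, and let D : A → A be a derivation of A of degree −|I|. Then the ℚ-linear map φ : B → B determined by φ(a·t_J) = a·t_J − t_I·D(a)·t_J for all homogeneous a ∈ A and all subsets J ⊆ {1,…,d} is a grading-preserving ℚ-algebra automorphism of B, whose inverse is the ℚ-linear map determined by a·t_J ↦ a·t_J + t_I·D(a)·t_J. -/

import Mathlib

/-- The square-free monomial `t_I = x_{i₁}⋯x_{i_k}` associated to a subset
`I = {i₁ < ⋯ < i_k} ⊆ {1,…,d}` (factors multiplied in increasing order of the indices;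
`t_∅ = 1`). -/
def sqFreeMonomial {B : Type} [Ring B] {d : ℕ} (x : Fin d → B) (I : Finset (Fin d)) : B :=
  ((I.sort (· ≤ ·)).map x).prod

set_option linter.unusedSectionVars false
set_option maxHeartbeats 1000000 in
section
namespace DTwist

variable {B : Type} [Ring B] [Algebra ℚ B]

lemma neg_one_pow_mul_eq_smul (n : ℕ) (z : B) :
    (-1 : B) ^ n * z = ((-1 : ℚ) ^ n) • z := by
  rw [Algebra.smul_def, map_pow, map_neg, map_one]

lemma neg_one_pow_smul_congr {M : Type*} [AddCommGroup M] [Module ℚ M]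
    {m n : ℕ} (h : m % 2 = n % 2) (z : M) : ((-1 : ℚ) ^ m) • z = ((-1 : ℚ) ^ n) • z := by
  rw [← Nat.div_add_mod m 2, ← Nat.div_add_mod n 2, pow_add, pow_add, pow_mul, pow_mul]
  norm_num [h]

lemma neg_one_pow_smul_even {M : Type*} [AddCommGroup M] [Module ℚ M]
    {n : ℕ} (h : n % 2 = 0) (z : M) : ((-1 : ℚ) ^ n) • z = z := by
  rw [neg_one_pow_smul_congr (n := 0) h z, pow_zero, one_smul]

variable (𝒜 : ℕ → Submodule ℚ B) [GradedAlgebra 𝒜]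

section comm
variable (hcomm : ∀ (p q : ℕ), ∀ a ∈ 𝒜 p, ∀ b ∈ 𝒜 q, a * b = (-1 : B) ^ (p * q) * (b * a))
include hcomm

lemma swap_homog {p q : ℕ} {a b : B} (ha : a ∈ 𝒜 p) (hb : b ∈ 𝒜 q) :
    a * b = ((-1 : ℚ) ^ (p * q)) • (b * a) := by
  rw [hcomm p q a ha b hb, neg_one_pow_mul_eq_smul]

lemma sq_zero {a : B} (ha : a ∈ 𝒜 1) : a * a = 0 := by
  have h := swap_homog 𝒜 hcomm ha ha
  simp only [mul_one, pow_one, neg_smul, one_smul] at h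
  have : (2 : ℚ) • (a * a) = 0 := by
    rw [two_smul]; nth_rewrite 2 [h]; exact add_neg_cancel _
  have h2 := congrArg (fun z => (2 : ℚ)⁻¹ • z) this
  simpa [smul_smul] using h2

end comm

variable {d : ℕ} {x : Fin d → B}

lemma listProd_mem (hx : ∀ i, x i ∈ 𝒜 1) (s : List (Fin d)) :
    (s.map x).prod ∈ 𝒜 s.length := by
  induction s with
  | nil => simpa using SetLike.one_mem_graded 𝒜
  | cons a t ih =>
      have := SetLike.mul_mem_graded (hx a) ih
      simpa [List.length_cons, Nat.add_comm] using this

lemma monomial_mem (hx : ∀ i, x i ∈ 𝒜 1) (J : Finset (Fin d)) :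
    sqFreeMonomial x J ∈ 𝒜 J.card := by
  have := listProd_mem 𝒜 hx (J.sort (· ≤ ·))
  simpa [sqFreeMonomial, Finset.length_sort] using this

section comm2
variable (hcomm : ∀ (p q : ℕ), ∀ a ∈ 𝒜 p, ∀ b ∈ 𝒜 q, a * b = (-1 : B) ^ (p * q) * (b * a))
  (hx : ∀ i, x i ∈ 𝒜 1)
include hcomm hx

lemma prod_perm {l₁ l₂ : List (Fin d)} (h : l₁.Perm l₂) :
    ∃ q : ℚ, (l₁.map x).prod = q • (l₂.map x).prod := by
  induction h with
  | nil => exact ⟨1, by simp⟩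
  | cons a t ih =>
      obtain ⟨q, hq⟩ := ih
      exact ⟨q, by simp [hq, mul_smul_comm]⟩
  | swap a b l =>
      refine ⟨(-1 : ℚ) ^ (1 * 1), ?_⟩
      simp only [List.map_cons, List.prod_cons, ← mul_assoc]
      rw [swap_homog 𝒜 hcomm (hx b) (hx a), smul_mul_assoc]
  | trans h₁ h₂ ih₁ ih₂ =>
      obtain ⟨q₁, hq₁⟩ := ih₁
      obtain ⟨q₂, hq₂⟩ := ih₂
      exact ⟨q₁ * q₂, by rw [hq₁, hq₂, smul_smul]⟩

lemma prod_eq_zero_of_not_nodup {s : List (Fin d)} (h : ¬ s.Nodup) :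
    (s.map x).prod = 0 := by
  induction s with
  | nil => simp at h
  | cons a t ih =>
      rw [List.nodup_cons, not_and_or] at h
      rcases h with h | h
      · push_neg at h
        obtain ⟨q, hq⟩ := prod_perm 𝒜 hcomm hx (List.perm_cons_erase h)
        simp only [List.map_cons, List.prod_cons] at hq ⊢
        rw [hq, mul_smul_comm, ← mul_assoc, sq_zero 𝒜 hcomm (hx a), zero_mul, smul_zero]
      · simp [List.prod_cons, ih h]

lemma prod_eq_smul_monomial (s : List (Fin d)) :
    ∃ q : ℚ, (s.map x).prod = q • sqFreeMonomial x s.toFinset := by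
  by_cases hnd : s.Nodup
  · have hperm : s.Perm (s.toFinset.sort (· ≤ ·)) :=
      List.perm_of_nodup_nodup_toFinset_eq hnd (Finset.sort_nodup _ _)
        (by rw [Finset.sort_toFinset])
    obtain ⟨q, hq⟩ := prod_perm 𝒜 hcomm hx hperm
    exact ⟨q, hq⟩
  · exact ⟨0, by rw [prod_eq_zero_of_not_nodup 𝒜 hcomm hx hnd, zero_smul]⟩

lemma monomial_mul_monomial (J K : Finset (Fin d)) :
    ∃ q : ℚ, sqFreeMonomial x J * sqFreeMonomial x K = q • sqFreeMonomial x (J ∪ K) := by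
  obtain ⟨q, hq⟩ := prod_eq_smul_monomial 𝒜 hcomm hx (J.sort (· ≤ ·) ++ K.sort (· ≤ ·))
  refine ⟨q, ?_⟩
  rw [sqFreeMonomial, sqFreeMonomial, ← List.prod_append, ← List.map_append, hq]
  congr 2
  rw [List.toFinset_append, Finset.sort_toFinset, Finset.sort_toFinset]

lemma monomial_sq_zero {I : Finset (Fin d)} (hI : I.Nonempty) :
    sqFreeMonomial x I * sqFreeMonomial x I = 0 := by
  rw [sqFreeMonomial, ← List.prod_append, ← List.map_append]
  apply prod_eq_zero_of_not_nodup 𝒜 hcomm hx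
  obtain ⟨i, hi⟩ := hI
  intro hnd
  have hmem : i ∈ I.sort (· ≤ ·) := by simpa [Finset.mem_sort] using hi
  exact (List.disjoint_of_nodup_append hnd) hmem hmem

lemma mono_conj_zero {I : Finset (Fin d)} (hI : I.Nonempty) (z : B) :
    sqFreeMonomial x I * z * sqFreeMonomial x I = 0 := by
  induction z using DirectSum.Decomposition.inductionOn 𝒜 with
  | zero => simp
  | @homogeneous q z =>
      obtain ⟨z, hz⟩ := z
      simp only
      rw [mul_assoc, swap_homog 𝒜 hcomm hz (monomial_mem 𝒜 hx I), mul_smul_comm,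
        ← mul_assoc, monomial_sq_zero 𝒜 hcomm hx hI, zero_mul, smul_zero]
  | add a b ha hb => rw [mul_add, add_mul, ha, hb, add_zero]

end comm2

variable (x : Fin d → B) (A : Subalgebra ℚ B)

/-- The `A`-coordinates-to-`B` map for the basis of square-free monomials. -/
def Fmap : (Finset (Fin d) → A) →ₗ[ℚ] B where
  toFun f := ∑ J : Finset (Fin d), sqFreeMonomial x J * ((f J : A) : B)
  map_add' f g := by simp [mul_add, Finset.sum_add_distrib]
  map_smul' q f := by simp [Finset.smul_sum, mul_smul_comm]

/-- The twisted extension of the derivation `D` to coordinates. -/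
def Dmap (I : Finset (Fin d)) (D : A →ₗ[ℚ] A) : (Finset (Fin d) → A) →ₗ[ℚ] B where
  toFun f := ∑ J : Finset (Fin d),
    ((-1 : ℚ) ^ (I.card * J.card)) • (sqFreeMonomial x J * ((D (f J) : A) : B))
  map_add' f g := by simp [mul_add, smul_add, Finset.sum_add_distrib]
  map_smul' q f := by
    simp [Finset.smul_sum, mul_smul_comm, smul_comm q]

variable (hfree : Function.Bijective
      (fun f : Finset (Fin d) → A =>
        ∑ I : Finset (Fin d), sqFreeMonomial x I * ((f I : A) : B)))

/-- The coordinate isomorphism. -/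
noncomputable def coordsEquiv : (Finset (Fin d) → A) ≃ₗ[ℚ] B :=
  LinearEquiv.ofBijective (Fmap x A) hfree

/-- The twist `b ↦ t_I · Δ(b)`. -/
noncomputable def Nmap (I : Finset (Fin d)) (D : A →ₗ[ℚ] A) : B →ₗ[ℚ] B :=
  (LinearMap.mulLeft ℚ (sqFreeMonomial x I)) ∘ₗ (Dmap x A I D) ∘ₗ
    (coordsEquiv x A hfree).symm.toLinearMap

lemma Nmap_apply (I : Finset (Fin d)) (D : A →ₗ[ℚ] A) (b : B) :
    Nmap x A hfree I D b =
      sqFreeMonomial x I * (Dmap x A I D ((coordsEquiv x A hfree).symm b)) := rfl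

section main

variable (hcomm : ∀ (p q : ℕ), ∀ a ∈ 𝒜 p, ∀ b ∈ 𝒜 q, a * b = (-1 : B) ^ (p * q) * (b * a))
  (hx : ∀ i, x i ∈ 𝒜 1) (I : Finset (Fin d)) (D : A →ₗ[ℚ] A)
  (hdeg : ∀ (p : ℕ) (a : A), (a : B) ∈ 𝒜 p →
      (p < I.card → D a = 0) ∧
      (∀ q : ℕ, p = q + I.card → ((D a : A) : B) ∈ 𝒜 q))

include hcomm hx hdeg in
lemma Nmap_gen {p : ℕ} (a : A) (J : Finset (Fin d)) (ha : (a : B) ∈ 𝒜 p) :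
    Nmap x A hfree I D ((a : B) * sqFreeMonomial x J) =
      sqFreeMonomial x I * (((D a : A) : B) * sqFreeMonomial x J) := by
  classical
  set k := I.card
  set c := J.card
  set tJ := sqFreeMonomial x J with htJ
  have htJmem : tJ ∈ 𝒜 c := monomial_mem 𝒜 hx J
  set f₀ : Finset (Fin d) → A := fun K => if K = J then ((-1 : ℚ) ^ (p * c)) • a else 0 with hf₀
  have hF : Fmap x A f₀ = (a : B) * tJ := by
    show (∑ K : Finset (Fin d), sqFreeMonomial x K * ((f₀ K : A) : B)) = (a : B) * tJ
    rw [Finset.sum_eq_single J]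
    · rw [show f₀ J = ((-1 : ℚ) ^ (p * c)) • a from if_pos rfl,
        SetLike.val_smul, mul_smul_comm, ← htJ,
        swap_homog 𝒜 hcomm htJmem ha, smul_smul, ← pow_add]
      apply neg_one_pow_smul_even
      have : p * c + c * p = 2 * (p * c) := by ring
      omega
    · intro K _ hK
      simp [hf₀, if_neg hK]
    · intro h; exact absurd (Finset.mem_univ J) h
  have hcoords : (coordsEquiv x A hfree).symm ((a : B) * tJ) = f₀ := by
    rw [LinearEquiv.symm_apply_eq, ← hF]; rfl
  rw [Nmap_apply, hcoords]
  have hD : Dmap x A I D f₀ =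
      ((-1 : ℚ) ^ (k * c + p * c)) • (tJ * ((D a : A) : B)) := by
    show (∑ K : Finset (Fin d),
        ((-1 : ℚ) ^ (k * K.card)) • (sqFreeMonomial x K * ((D (f₀ K) : A) : B)))
      = ((-1 : ℚ) ^ (k * c + p * c)) • (tJ * ((D a : A) : B))
    rw [Finset.sum_eq_single J]
    · rw [show f₀ J = ((-1 : ℚ) ^ (p * c)) • a from if_pos rfl,
        map_smul, SetLike.val_smul, mul_smul_comm, smul_smul, ← pow_add, ← htJ]
    · intro K _ hK
      simp [hf₀, if_neg hK]
    · intro h; exact absurd (Finset.mem_univ J) h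
  rw [hD]
  rcases lt_or_ge p k with hpk | hpk
  · have hD0 : D a = 0 := (hdeg p a ha).1 hpk
    rw [hD0]
    simp
  · obtain ⟨q, hq⟩ : ∃ q : ℕ, p = q + k := ⟨p - k, by omega⟩
    have hDa : ((D a : A) : B) ∈ 𝒜 q := (hdeg p a ha).2 q hq
    rw [swap_homog 𝒜 hcomm htJmem hDa, smul_smul, ← pow_add]
    rw [mul_smul_comm]
    apply neg_one_pow_smul_even
    have : k * c + p * c + c * q = 2 * (k * c + q * c) := by rw [hq]; ring
    omega

include hcomm hx hdeg in
lemma Nmap_core (hleib : ∀ (p : ℕ) (a b : A), (a : B) ∈ 𝒜 p →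
      D (a * b) = D a * b + (-1 : A) ^ (I.card * p) * (a * D b))
    {p p' : ℕ} (a a' : A) (J K : Finset (Fin d))
    (ha : (a : B) ∈ 𝒜 p) (ha' : (a' : B) ∈ 𝒜 p') :
    Nmap x A hfree I D (((a : B) * sqFreeMonomial x J) * ((a' : B) * sqFreeMonomial x K)) =
      Nmap x A hfree I D ((a : B) * sqFreeMonomial x J) * ((a' : B) * sqFreeMonomial x K) +
      ((a : B) * sqFreeMonomial x J) *
        Nmap x A hfree I D ((a' : B) * sqFreeMonomial x K) := by
  classical
  set k := I.card with hk
  set cJ := J.card with hcJ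
  set tI := sqFreeMonomial x I with htI
  set tJ := sqFreeMonomial x J with htJ
  set tK := sqFreeMonomial x K with htK
  set tL := sqFreeMonomial x (J ∪ K) with htL
  obtain ⟨q0, hq0⟩ := monomial_mul_monomial 𝒜 hcomm hx J K
  rw [← htJ, ← htK, ← htL] at hq0
  have htJmem : tJ ∈ 𝒜 cJ := monomial_mem 𝒜 hx J
  have htImem : tI ∈ 𝒜 k := monomial_mem 𝒜 hx I
  have h1 : tJ * (a' : B) = ((-1 : ℚ) ^ (cJ * p')) • ((a' : B) * tJ) :=
    swap_homog 𝒜 hcomm htJmem ha'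
  -- the product of the two generators, normalised
  have hbc : ((a : B) * tJ) * ((a' : B) * tK)
      = ((-1 : ℚ) ^ (cJ * p') * q0) • (((a * a' : A) : B) * tL) := by
    rw [MulMemClass.coe_mul]
    simp only [mul_assoc]
    rw [← mul_assoc tJ ((a' : B)), h1]
    simp only [smul_mul_assoc, mul_smul_comm, mul_assoc, smul_smul]
    rw [hq0]
    simp only [mul_smul_comm, smul_smul]
  have haa' : ((a * a' : A) : B) ∈ 𝒜 (p + p') := by
    rw [MulMemClass.coe_mul]; exact SetLike.mul_mem_graded ha ha'
  have hNbc : Nmap x A hfree I D (((a : B) * tJ) * ((a' : B) * tK))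
      = ((-1 : ℚ) ^ (cJ * p') * q0) • (tI * (((D (a * a') : A) : B) * tL)) := by
    rw [hbc, map_smul, Nmap_gen 𝒜 x A hfree hcomm hx I D hdeg (a * a') (J ∪ K) haa', htL]
  -- the first term of the right-hand side
  have ht1 : (tI * (((D a : A) : B) * tJ)) * ((a' : B) * tK)
      = ((-1 : ℚ) ^ (cJ * p') * q0) • (tI * ((((D a : A) : B) * (a' : B)) * tL)) := by
    simp only [mul_assoc]
    rw [← mul_assoc tJ ((a' : B)), h1]
    simp only [smul_mul_assoc, mul_smul_comm, mul_assoc, smul_smul]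
    rw [hq0]
    simp only [mul_smul_comm, smul_smul]
  -- the coe of the Leibniz rule
  have hDaa' : ((D (a * a') : A) : B)
      = ((D a : A) : B) * (a' : B) + ((-1 : ℚ) ^ (k * p)) • ((a : B) * ((D a' : A) : B)) := by
    rw [hleib p a a' ha]
    push_cast
    rw [neg_one_pow_mul_eq_smul]
  rw [hNbc,
    Nmap_gen 𝒜 x A hfree hcomm hx I D hdeg a J ha,
    Nmap_gen 𝒜 x A hfree hcomm hx I D hdeg a' K ha', ← htI, ← htJ, ← htK, ht1, hDaa']
  rcases lt_or_ge p' k with hp'k | hp'k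
  · -- `D a' = 0` : both remaining terms vanish
    have hD0 : D a' = 0 := (hdeg p' a' ha').1 hp'k
    rw [hD0]
    simp [mul_add, smul_add]
  · obtain ⟨q', hq'⟩ : ∃ q' : ℕ, p' = q' + k := ⟨p' - k, by omega⟩
    have hDa' : ((D a' : A) : B) ∈ 𝒜 q' := (hdeg p' a' ha').2 q' hq'
    have h2 : tJ * tI = ((-1 : ℚ) ^ (cJ * k)) • (tI * tJ) :=
      swap_homog 𝒜 hcomm htJmem htImem
    have h3 : tJ * ((D a' : A) : B) = ((-1 : ℚ) ^ (cJ * q')) • (((D a' : A) : B) * tJ) :=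
      swap_homog 𝒜 hcomm htJmem hDa'
    have h4 : (a : B) * tI = ((-1 : ℚ) ^ (p * k)) • (tI * (a : B)) :=
      swap_homog 𝒜 hcomm ha htImem
    -- the second term of the right-hand side
    have ht2 : ((a : B) * tJ) * (tI * (((D a' : A) : B) * tK))
        = ((-1 : ℚ) ^ (cJ * k + p * k + cJ * q') * q0) •
            (tI * (((a : B) * ((D a' : A) : B)) * tL)) := by
      simp only [mul_assoc]
      rw [← mul_assoc tJ tI, h2]
      simp only [smul_mul_assoc, mul_smul_comm, mul_assoc, smul_smul]
      rw [← mul_assoc tJ (((D a' : A) : B)), h3]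
      simp only [smul_mul_assoc, mul_smul_comm, mul_assoc, smul_smul]
      rw [hq0]
      simp only [mul_smul_comm, smul_smul]
      rw [← mul_assoc ((a : B)) tI, h4]
      simp only [smul_mul_assoc, mul_smul_comm, mul_assoc, smul_smul]
      match_scalars
      ring
    rw [ht2]
    subst hq'
    simp only [add_mul, mul_add, smul_add, smul_mul_assoc, mul_smul_comm, smul_smul, mul_assoc]
    match_scalars
    · ring
    · rw [mul_one, mul_one, mul_comm q0, ← mul_assoc, ← pow_add]
      congr 2
      ring

section span

/-- The homogeneous generators of total degree `n`. -/
def gens (n : ℕ) : Set B :=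
  {b | ∃ (p : ℕ) (a : A) (J : Finset (Fin d)),
    (a : B) ∈ 𝒜 p ∧ p + J.card = n ∧ b = (a : B) * sqFreeMonomial x J}

variable (hAgr : ∀ a ∈ A, ∀ p : ℕ, (DirectSum.decompose 𝒜 a p : B) ∈ A)

include hfree hcomm hx hAgr in
lemma mem_span_gens (b : B) : b ∈ Submodule.span ℚ (⋃ n, gens 𝒜 x A n) := by
  classical
  have hb : Fmap x A ((coordsEquiv x A hfree).symm b) = b :=
    (coordsEquiv x A hfree).apply_symm_apply b
  rw [← hb]
  show (∑ J : Finset (Fin d),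
      sqFreeMonomial x J * ((((coordsEquiv x A hfree).symm b) J : A) : B)) ∈ _
  apply Submodule.sum_mem
  intro J _
  set c : A := ((coordsEquiv x A hfree).symm b) J
  have hdec : ((c : B)) = ∑ p ∈ DFinsupp.support (DirectSum.decompose 𝒜 (c : B)),
      ((DirectSum.decompose 𝒜 (c : B) p : 𝒜 p) : B) :=
    (DirectSum.sum_support_decompose 𝒜 (c : B)).symm
  rw [hdec, Finset.mul_sum]
  apply Submodule.sum_mem
  intro p _
  have hmem : ((DirectSum.decompose 𝒜 (c : B) p : 𝒜 p) : B) ∈ 𝒜 p := SetLike.coe_mem _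
  have hmemA : ((DirectSum.decompose 𝒜 (c : B) p : 𝒜 p) : B) ∈ A := hAgr (c : B) c.2 p
  rw [swap_homog 𝒜 hcomm (monomial_mem 𝒜 hx J) hmem]
  apply Submodule.smul_mem
  apply Submodule.subset_span
  refine Set.mem_iUnion.2 ⟨p + J.card, p, ⟨_, hmemA⟩, J, hmem, rfl, rfl⟩

/-- Projection onto the degree-`n` component, as a linear map. -/
noncomputable def projn (n : ℕ) : B →ₗ[ℚ] B :=
  (𝒜 n).subtype ∘ₗ (DFinsupp.lapply n) ∘ₗ (DirectSum.decomposeLinearEquiv 𝒜).toLinearMap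

lemma projn_apply (n : ℕ) (b : B) : projn 𝒜 n b = (DirectSum.decompose 𝒜 b n : B) := rfl

include hx in
lemma gens_subset_graded {n : ℕ} {g : B} (hg : g ∈ gens 𝒜 x A n) : g ∈ 𝒜 n := by
  obtain ⟨p, a, J, ha, hn, rfl⟩ := hg
  have := SetLike.mul_mem_graded ha (monomial_mem 𝒜 hx J)
  rwa [hn] at this

include hfree hcomm hx hAgr in
lemma mem_span_gens_graded {n : ℕ} {b : B} (hb : b ∈ 𝒜 n) :
    b ∈ Submodule.span ℚ (gens 𝒜 x A n) := by
  classical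
  have h1 := mem_span_gens 𝒜 x A hfree hcomm hx hAgr b
  have h2 : projn 𝒜 n b = b := by rw [projn_apply]; exact DirectSum.decompose_of_mem_same 𝒜 hb
  rw [← h2]
  clear h2 hb
  induction h1 using Submodule.span_induction with
  | mem g hg =>
      obtain ⟨m, hm⟩ := Set.mem_iUnion.1 hg
      have hgm : g ∈ 𝒜 m := gens_subset_graded 𝒜 x A hx hm
      by_cases hmn : m = n
      · subst hmn
        rw [projn_apply, DirectSum.decompose_of_mem_same 𝒜 hgm]
        exact Submodule.subset_span hm
      · rw [projn_apply, DirectSum.decompose_of_mem_ne 𝒜 hgm hmn]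
        exact Submodule.zero_mem _
  | zero => rw [map_zero]; exact Submodule.zero_mem _
  | add y z _ _ hy hz => rw [map_add]; exact Submodule.add_mem _ hy hz
  | smul r y _ hy => rw [map_smul]; exact Submodule.smul_mem _ r hy

include hfree hcomm hx hAgr hdeg in
lemma Nmap_leibniz (hleib : ∀ (p : ℕ) (a b : A), (a : B) ∈ 𝒜 p →
      D (a * b) = D a * b + (-1 : A) ^ (I.card * p) * (a * D b)) (b c : B) :
    Nmap x A hfree I D (b * c) =
      Nmap x A hfree I D b * c + b * Nmap x A hfree I D c := by
  classical
  induction (mem_span_gens 𝒜 x A hfree hcomm hx hAgr b) using Submodule.span_induction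
    generalizing c with
  | mem g hg =>
      induction (mem_span_gens 𝒜 x A hfree hcomm hx hAgr c) using Submodule.span_induction with
      | mem g' hg' =>
          obtain ⟨m, hm⟩ := Set.mem_iUnion.1 hg
          obtain ⟨m', hm'⟩ := Set.mem_iUnion.1 hg'
          obtain ⟨p, a, J, ha, -, rfl⟩ := hm
          obtain ⟨p', a', K, ha', -, rfl⟩ := hm'
          exact Nmap_core 𝒜 x A hfree hcomm hx I D hdeg hleib a a' J K ha ha'
      | zero => simp
      | add y z _ _ hy hz =>
          simp only [mul_add, map_add, hy, hz]
          abel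
      | smul r y _ hy =>
          simp only [mul_smul_comm, map_smul, hy, smul_add]
  | zero => simp
  | add b₁ b₂ _ _ h₁ h₂ =>
      simp only [add_mul, map_add, h₁, h₂]
      abel
  | smul r y _ hy =>
      simp only [smul_mul_assoc, map_smul, hy, smul_add]

lemma D_one_eq_zero
    (hleib : ∀ (p : ℕ) (a b : A), (a : B) ∈ 𝒜 p →
      D (a * b) = D a * b + (-1 : A) ^ (I.card * p) * (a * D b)) : D 1 = 0 := by
  have h := hleib 0 1 1 (by rw [OneMemClass.coe_one]; exact SetLike.one_mem_graded 𝒜)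
  simp only [mul_one, one_mul, Nat.mul_zero, pow_zero] at h
  exact left_eq_add.mp h

include hfree hcomm hx hdeg in
lemma Nmap_one_arg {J : Finset (Fin d)}
    (hD1 : D 1 = 0) : Nmap x A hfree I D (sqFreeMonomial x J) = 0 := by
  have h1 : sqFreeMonomial x J = ((1 : A) : B) * sqFreeMonomial x J := by
    rw [OneMemClass.coe_one, one_mul]
  rw [h1, Nmap_gen 𝒜 x A hfree hcomm hx I D hdeg (1 : A) J
    (by rw [OneMemClass.coe_one]; exact SetLike.one_mem_graded 𝒜), hD1]
  simp

include hfree hcomm hx hAgr hdeg in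
lemma Nmap_sq_zero (hI : I.Nonempty)
    (hleib : ∀ (p : ℕ) (a b : A), (a : B) ∈ 𝒜 p →
      D (a * b) = D a * b + (-1 : A) ^ (I.card * p) * (a * D b)) (b : B) :
    Nmap x A hfree I D (Nmap x A hfree I D b) = 0 := by
  have hD1 : D 1 = 0 := D_one_eq_zero 𝒜 A I D hleib
  rw [Nmap_apply x A hfree I D b,
    Nmap_leibniz 𝒜 x A hfree hcomm hx I D hdeg hAgr hleib,
    Nmap_one_arg 𝒜 x A hfree hcomm hx I D hdeg hD1, zero_mul, zero_add,
    Nmap_apply x A hfree I D, ← mul_assoc,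
    monomial_sq_zero 𝒜 hcomm hx hI, zero_mul]

include hfree hcomm hx hAgr hdeg in
lemma Nmap_graded {n : ℕ} {b : B} (hb : b ∈ 𝒜 n) :
    Nmap x A hfree I D b ∈ 𝒜 n := by
  classical
  have hspan := mem_span_gens_graded 𝒜 x A hfree hcomm hx hAgr hb
  clear hb
  induction hspan using Submodule.span_induction with
  | mem g hg =>
      obtain ⟨p, a, J, ha, hn, rfl⟩ := hg
      rw [Nmap_gen 𝒜 x A hfree hcomm hx I D hdeg a J ha]
      rcases lt_or_ge p I.card with hpk | hpk
      · rw [(hdeg p a ha).1 hpk]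
        simp
      · obtain ⟨q, hq⟩ : ∃ q : ℕ, p = q + I.card := ⟨p - I.card, by omega⟩
        have hDa : ((D a : A) : B) ∈ 𝒜 q := (hdeg p a ha).2 q hq
        have hmem := SetLike.mul_mem_graded (monomial_mem 𝒜 hx I)
          (SetLike.mul_mem_graded hDa (monomial_mem 𝒜 hx J))
        have heq : I.card + (q + J.card) = n := by omega
        rwa [heq] at hmem
  | zero => rw [map_zero]; exact Submodule.zero_mem _
  | add y z _ _ hy hz => rw [map_add]; exact Submodule.add_mem _ hy hz
  | smul r y _ hy => rw [map_smul]; exact Submodule.smul_mem _ r hy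

end span
end main
end DTwist

end

/-- the automorphism lemma inside the proof of Proposition 4.5 of
Belegradek–Kapovitch.  In the torus expansion setup, let `I ≠ ∅` and let `D : A → A` be a
derivation of `A` of degree `-|I|`.  Then the ℚ-linear map `φ : B → B` determined by
`φ(a·t_J) = a·t_J − t_I·D(a)·t_J` (for homogeneous `a ∈ A` and all `J`) is a
grading-preserving ℚ-algebra automorphism of `B`, with inverse determined by
`a·t_J ↦ a·t_J + t_I·D(a)·t_J`. -/
theorem derivation_twist_is_algebra_automorphism
    {B : Type} [Ring B] [Algebra ℚ B]
    (𝒜 : ℕ → Submodule ℚ B) [GradedAlgebra 𝒜]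
    -- graded commutativity of `B`
    (hcomm : ∀ (p q : ℕ), ∀ a ∈ 𝒜 p, ∀ b ∈ 𝒜 q,
      a * b = (-1 : B) ^ (p * q) * (b * a))
    -- `A` is a graded subalgebra of `B`
    (A : Subalgebra ℚ B)
    (hAgr : ∀ a ∈ A, ∀ p : ℕ, (DirectSum.decompose 𝒜 a p : B) ∈ A)
    -- `x₁, …, x_d` are degree-one elements …
    (d : ℕ) (x : Fin d → B) (hx : ∀ i, x i ∈ 𝒜 1)
    -- … whose `2^d` square-free monomials `t_I` form a basis of `B` as a left `A`-module
    (hfree : Function.Bijective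
      (fun f : Finset (Fin d) → A =>
        ∑ I : Finset (Fin d), sqFreeMonomial x I * ((f I : A) : B)))
    -- `I` is a non-empty subset of `{1,…,d}`
    (I : Finset (Fin d)) (hI : I.Nonempty)
    -- `D : A → A` is a derivation of `A` of degree `-|I|`:
    (D : A →ₗ[ℚ] A)
    (hdeg : ∀ (p : ℕ) (a : A), (a : B) ∈ 𝒜 p →
      (p < I.card → D a = 0) ∧
      (∀ q : ℕ, p = q + I.card → ((D a : A) : B) ∈ 𝒜 q))
    (hleib : ∀ (p : ℕ) (a b : A), (a : B) ∈ 𝒜 p →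
      D (a * b) = D a * b + (-1 : A) ^ (I.card * p) * (a * D b)) :
    -- then the map determined by `a·t_J ↦ a·t_J − t_I·D(a)·t_J` is a grading-preserving
    -- ℚ-algebra automorphism of `B`, with inverse determined by `a·t_J ↦ a·t_J + t_I·D(a)·t_J`,
    (∃ φ : B ≃ₐ[ℚ] B,
      (∀ (p : ℕ) (a : A) (J : Finset (Fin d)), (a : B) ∈ 𝒜 p →
        φ ((a : B) * sqFreeMonomial x J) =
          (a : B) * sqFreeMonomial x J -
            sqFreeMonomial x I * (((D a : A) : B) * sqFreeMonomial x J)) ∧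
      (∀ p : ℕ, ∀ b ∈ 𝒜 p, φ b ∈ 𝒜 p) ∧
      (∀ (p : ℕ) (a : A) (J : Finset (Fin d)), (a : B) ∈ 𝒜 p →
        φ.symm ((a : B) * sqFreeMonomial x J) =
          (a : B) * sqFreeMonomial x J +
            sqFreeMonomial x I * (((D a : A) : B) * sqFreeMonomial x J))) ∧
    -- and a ℚ-linear map satisfying this prescription is unique
    (∀ ψ₁ ψ₂ : B →ₗ[ℚ] B,
      (∀ (p : ℕ) (a : A) (J : Finset (Fin d)), (a : B) ∈ 𝒜 p →
        ψ₁ ((a : B) * sqFreeMonomial x J) =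
          (a : B) * sqFreeMonomial x J -
            sqFreeMonomial x I * (((D a : A) : B) * sqFreeMonomial x J)) →
      (∀ (p : ℕ) (a : A) (J : Finset (Fin d)), (a : B) ∈ 𝒜 p →
        ψ₂ ((a : B) * sqFreeMonomial x J) =
          (a : B) * sqFreeMonomial x J -
            sqFreeMonomial x I * (((D a : A) : B) * sqFreeMonomial x J)) →
      ψ₁ = ψ₂) := by
  classical
  set NL := DTwist.Nmap x A hfree I D with hNL
  have hgen : ∀ (p : ℕ) (a : A) (J : Finset (Fin d)), (a : B) ∈ 𝒜 p →
      NL ((a : B) * sqFreeMonomial x J) =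
        sqFreeMonomial x I * (((D a : A) : B) * sqFreeMonomial x J) :=
    fun p a J ha => DTwist.Nmap_gen 𝒜 x A hfree hcomm hx I D hdeg a J ha
  have hLeib : ∀ b c : B, NL (b * c) = NL b * c + b * NL c :=
    DTwist.Nmap_leibniz 𝒜 x A hfree hcomm hx I D hdeg hAgr hleib
  have hNN : ∀ b, NL (NL b) = 0 :=
    DTwist.Nmap_sq_zero 𝒜 x A hfree hcomm hx I D hdeg hAgr hI hleib
  have hNbNc : ∀ b c : B, NL b * NL c = 0 := by
    intro b c
    rw [DTwist.Nmap_apply x A hfree I D b, DTwist.Nmap_apply x A hfree I D c, ← mul_assoc,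
      DTwist.mono_conj_zero 𝒜 hcomm hx hI, zero_mul]
  have hN1 : NL 1 = 0 := by
    have h0 : sqFreeMonomial x (∅ : Finset (Fin d)) = 1 := by simp [sqFreeMonomial]
    rw [show (1 : B) = sqFreeMonomial x (∅ : Finset (Fin d)) from h0.symm]
    exact DTwist.Nmap_one_arg 𝒜 x A hfree hcomm hx I D hdeg
      (DTwist.D_one_eq_zero 𝒜 A I D hleib)
  set φL := (LinearMap.id : B →ₗ[ℚ] B) - NL with hφL
  set ψL := (LinearMap.id : B →ₗ[ℚ] B) + NL with hψL
  have hφapp : ∀ b, φL b = b - NL b := fun b => rfl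
  have hψapp : ∀ b, ψL b = b + NL b := fun b => rfl
  have hc1 : φL ∘ₗ ψL = LinearMap.id := by
    ext b
    simp only [LinearMap.comp_apply, hφapp, hψapp, map_add, hNN b, LinearMap.id_apply]
    abel
  have hc2 : ψL ∘ₗ φL = LinearMap.id := by
    ext b
    simp only [LinearMap.comp_apply, hφapp, hψapp, map_sub, hNN b, LinearMap.id_apply]
    abel
  set e := LinearEquiv.ofLinear φL ψL hc1 hc2 with he
  have happ : ∀ b, e b = φL b := fun b => rfl
  have hone : e 1 = 1 := by
    rw [happ, hφapp, hN1, sub_zero]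
  have hmul : ∀ b c : B, e (b * c) = e b * e c := by
    intro b c
    rw [happ, happ, happ, hφapp, hφapp, hφapp, hLeib b c, mul_sub, sub_mul, sub_mul, hNbNc b c]
    abel
  refine ⟨⟨AlgEquiv.ofLinearEquiv e hone hmul, ?_, ?_, ?_⟩, ?_⟩
  · intro p a J ha
    rw [AlgEquiv.ofLinearEquiv_apply, happ, hφapp, hgen p a J ha]
  · intro p b hb
    rw [AlgEquiv.ofLinearEquiv_apply, happ, hφapp]
    exact Submodule.sub_mem _ hb (DTwist.Nmap_graded 𝒜 x A hfree hcomm hx I D hdeg hAgr hb)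
  · intro p a J ha
    have hsymm : (AlgEquiv.ofLinearEquiv e hone hmul).symm ((a : B) * sqFreeMonomial x J)
        = ψL ((a : B) * sqFreeMonomial x J) := by
      show e.symm _ = _
      rw [he, LinearEquiv.ofLinear_symm_apply]
    rw [hsymm, hψapp, hgen p a J ha]
  · intro ψ₁ ψ₂ h₁ h₂
    ext b
    have hspan := DTwist.mem_span_gens 𝒜 x A hfree hcomm hx hAgr b
    induction hspan using Submodule.span_induction with
    | mem g hg =>
        obtain ⟨n, hn⟩ := Set.mem_iUnion.1 hg
        obtain ⟨p, a, J, ha, -, rfl⟩ := hn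
        rw [h₁ p a J ha, h₂ p a J ha]
    | zero => simp
    | add y z _ _ hy hz => rw [map_add, map_add, hy, hz]
    | smul r y _ hy => rw [map_smul, map_smul, hy]
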